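/- arXiv:1806.02894 — 3 statements merged into one kernel-verified Lean document; each statement's English description precedes it below -/
import Mathlib

section
/- Let X = I·D where I and D are independent random variables, I ∈ {0,1} with b = Pr[I = 1] ≤ e^{-2}, and 0 ≤ D ≤ κ·E[D] almost surely with κ ≥ 1. Let d̄ = E[D] and μ = E[X] = b·d̄. Then for a² = ln(1/b)/(2κ²d̄²), it holds that E[exp(a²(X - μ)²)] ≤ 2 (i.e., X is sub-Gaussian with variance proxy 6κ²d̄²/ln(1/b)). -/
set_option maxHeartbeats 1000000


open MeasureTheory Real ProbabilityTheory

theorem subgaussian_indicator_product {Ω : Type*} [MeasurableSpace Ω] (μ : Measure Ω)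
    [IsProbabilityMeasure μ] (I D : Ω → ℝ) (κ b dbar : ℝ)
    (hκ : 1 ≤ κ) (hdbar : 0 < dbar)
    (hindep : ProbabilityTheory.IndepFun I D μ)
    (hI01 : ∀ᵐ ω ∂μ, I ω = 0 ∨ I ω = 1)
    (hb : b = (μ {ω | I ω = 1}).toReal)
    (hb_pos : 0 < b) (hb_le : b ≤ Real.exp (-2))
    (hD : ∀ᵐ ω ∂μ, 0 ≤ D ω ∧ D ω ≤ κ * dbar)
    (hDint : Integrable D μ)
    (hDmean : ∫ ω, D ω ∂μ = dbar) :
    ∫ ω, Real.exp ((Real.log (1 / b) / (2 * κ ^ 2 * dbar ^ 2)) *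
        (I ω * D ω - b * dbar) ^ 2) ∂μ ≤ 2 := by
  set a : ℝ := Real.log (1 / b) / (2 * κ ^ 2 * dbar ^ 2) with ha_def
  clear_value a
  have hκ0 : (0:ℝ) < κ := by linarith
  have hd0 : dbar ≠ 0 := ne_of_gt hdbar
  have hκn : κ ≠ 0 := ne_of_gt hκ0
  have hL : Real.log (1/b) = -Real.log b := by rw [one_div, Real.log_inv]
  have hlogb : Real.log b ≤ -2 := by
    calc Real.log b ≤ Real.log (Real.exp (-2)) := Real.log_le_log hb_pos hb_le
    _ = -2 := Real.log_exp _
  have hLnn : 0 ≤ Real.log (1/b) := by rw [hL]; linarith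
  have ha_nn : 0 ≤ a := by
    rw [ha_def]; apply div_nonneg hLnn; positivity
  have h2e : (2:ℝ) ≤ Real.exp 1 := by
    have := Real.add_one_le_exp 1; linarith
  have hexp2 : Real.exp (-2) ≤ 1/4 := by
    have h1 : Real.exp (-2) * Real.exp 2 = 1 := by rw [← Real.exp_add]; norm_num
    have h2 : Real.exp 2 = Real.exp 1 * Real.exp 1 := by rw [← Real.exp_add]; norm_num
    nlinarith [Real.exp_pos (-2), Real.exp_pos 2]
  have hb1 : b ≤ 1/4 := hb_le.trans hexp2
  -- numeric bound
  have hexp18 : Real.exp (1/8) ≤ 3/2 := by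
    have h8 : Real.exp (1/8) ^ (8:ℕ) = Real.exp 1 := by
      rw [← Real.exp_nat_mul]; norm_num
    have hlt : Real.exp (1/8) ^ (8:ℕ) < (3/2:ℝ) ^ (8:ℕ) := by
      rw [h8]
      calc Real.exp 1 < 2.7182818286 := Real.exp_one_lt_d9
      _ < (3/2:ℝ)^(8:ℕ) := by norm_num
    exact (lt_of_pow_lt_pow_left₀ 8 (by norm_num) hlt).le
  have hterm1 : Real.exp (a * (b * dbar)^2) ≤ 3/2 := by
    refine le_trans (Real.exp_le_exp.mpr ?_) hexp18
    have hA1 : a * (b * dbar)^2 = Real.log (1/b) * b^2 / (2 * κ^2) := by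
      rw [ha_def]; field_simp
    rw [hA1, div_le_iff₀ (by positivity)]
    have hL1 : Real.log (1/b) ≤ 1/b := by
      have := Real.log_le_sub_one_of_pos (show (0:ℝ) < 1/b by positivity)
      linarith
    have hLb2 : Real.log (1/b) * b^2 ≤ b := by
      have := mul_le_mul_of_nonneg_right hL1 (sq_nonneg b)
      calc Real.log (1/b) * b^2 ≤ (1/b) * b^2 := this
      _ = b := by field_simp
    nlinarith [sq_nonneg κ, sq_nonneg (κ-1)]
  have hterm2 : Real.exp (a * (κ * dbar)^2) * b ≤ 1/2 := by
    have hA2 : a * (κ * dbar)^2 = Real.log (1/b) / 2 := by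
      rw [ha_def]; field_simp
    rw [hA2]
    have hEq : Real.exp (Real.log (1/b)/2) * b = Real.exp (Real.log b / 2) := by
      rw [show Real.log b / 2 = Real.log (1/b)/2 + Real.log b by rw [hL]; ring,
        Real.exp_add, Real.exp_log hb_pos]
    rw [hEq]
    have h1 : Real.exp (Real.log b / 2) ≤ Real.exp (-1) :=
      Real.exp_le_exp.mpr (by linarith)
    have h2 : Real.exp (-1) ≤ 1/2 := by
      have h3 : Real.exp (-1) * Real.exp 1 = 1 := by rw [← Real.exp_add]; norm_num
      nlinarith [Real.exp_pos (-1)]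
    linarith
  have hnum : Real.exp (a * (b * dbar)^2) + Real.exp (a * (κ * dbar)^2) * b ≤ 2 := by
    linarith
  -- measure-theoretic part
  by_cases hfi : Integrable (fun ω => Real.exp (a * (I ω * D ω - b * dbar) ^ 2)) μ
  · have hfnn : 0 ≤ᵐ[μ] fun ω => Real.exp (a * (I ω * D ω - b * dbar) ^ 2) :=
      Filter.Eventually.of_forall fun ω => (Real.exp_pos _).le
    rw [integral_eq_lintegral_of_nonneg_ae hfnn hfi.aestronglyMeasurable]
    set t := toMeasurable μ {ω | I ω = 1} with ht_def
    have htm : MeasurableSet t := measurableSet_toMeasurable μ _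
    have hμt : μ t = ENNReal.ofReal b := by
      rw [ht_def, measure_toMeasurable, hb,
        ENNReal.ofReal_toReal (measure_ne_top μ _)]
    have hpt : ∀ᵐ ω ∂μ, ENNReal.ofReal (Real.exp (a * (I ω * D ω - b * dbar) ^ 2)) ≤
        ENNReal.ofReal (Real.exp (a * (b * dbar)^2)) +
          t.indicator (fun _ => ENNReal.ofReal (Real.exp (a * (κ * dbar)^2))) ω := by
      filter_upwards [hI01, hD] with ω hIω hDω
      rcases hIω with h0 | h1
      · have hfe : Real.exp (a * (I ω * D ω - b * dbar) ^ 2) =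
            Real.exp (a * (b * dbar)^2) := by
          rw [h0]; ring_nf
        rw [hfe]; exact le_self_add
      · have hmem : ω ∈ t := subset_toMeasurable μ _ h1
        rw [Set.indicator_of_mem hmem]
        have hfle : Real.exp (a * (I ω * D ω - b * dbar) ^ 2) ≤
            Real.exp (a * (κ * dbar)^2) := by
          apply Real.exp_le_exp.mpr
          apply mul_le_mul_of_nonneg_left _ ha_nn
          rw [h1, one_mul]
          have hbd : 0 ≤ b * dbar := by positivity
          have hbκ : b * dbar ≤ κ * dbar := by nlinarith
          exact sq_le_sq' (by nlinarith [hDω.1]) (by nlinarith [hDω.2])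
        exact le_trans (ENNReal.ofReal_le_ofReal hfle) le_add_self
    have hlin : ∫⁻ ω, ENNReal.ofReal (Real.exp (a * (I ω * D ω - b * dbar) ^ 2)) ∂μ ≤
        ENNReal.ofReal 2 := by
      calc ∫⁻ ω, ENNReal.ofReal (Real.exp (a * (I ω * D ω - b * dbar) ^ 2)) ∂μ
          ≤ ∫⁻ ω, (ENNReal.ofReal (Real.exp (a * (b * dbar)^2)) +
            t.indicator (fun _ => ENNReal.ofReal (Real.exp (a * (κ * dbar)^2))) ω) ∂μ :=
            lintegral_mono_ae hpt
        _ = ENNReal.ofReal (Real.exp (a * (b * dbar)^2)) * μ Set.univ +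
            ENNReal.ofReal (Real.exp (a * (κ * dbar)^2)) * μ t := by
            rw [lintegral_add_left measurable_const, lintegral_const,
              lintegral_indicator_const htm]
        _ = ENNReal.ofReal (Real.exp (a * (b * dbar)^2)) +
            ENNReal.ofReal (Real.exp (a * (κ * dbar)^2)) * ENNReal.ofReal b := by
            rw [measure_univ, mul_one, hμt]
        _ = ENNReal.ofReal (Real.exp (a * (b * dbar)^2) +
            Real.exp (a * (κ * dbar)^2) * b) := by
            rw [← ENNReal.ofReal_mul (Real.exp_pos _).le,
              ← ENNReal.ofReal_add (Real.exp_pos _).le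
                (mul_nonneg (Real.exp_pos _).le hb_pos.le)]
        _ ≤ ENNReal.ofReal 2 := ENNReal.ofReal_le_ofReal hnum
    exact ENNReal.toReal_le_of_le_ofReal (by norm_num) hlin
  · rw [integral_undef hfi]; norm_num
end

section
/- Suppose X₁, ..., X_n are negatively associated random variables. Then for every real number λ, E[exp(λ·Σ_{i=1}^n X_i)] ≤ Π_{i=1}^n E[exp(λX_i)]. -/
open MeasureTheory Real Finset

/-- Random variables `X 0, ..., X (n-1)` are negatively associated under `μ` if for every
pair of disjoint index sets `A₁, A₂` and every pair of coordinatewise non-decreasing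
functions `f, g` depending only on the coordinates in `A₁` resp. `A₂`, the covariance of
`f ∘ X` and `g ∘ X` is non-positive. -/
def NegAssoc {Ω : Type*} [MeasurableSpace Ω] (μ : Measure Ω) {n : ℕ}
    (X : Fin n → Ω → ℝ) : Prop :=
  ∀ A₁ A₂ : Finset (Fin n), Disjoint A₁ A₂ →
    ∀ f g : (Fin n → ℝ) → ℝ, Monotone f → Monotone g →
      (∀ x y : Fin n → ℝ, (∀ i ∈ A₁, x i = y i) → f x = f y) →
      (∀ x y : Fin n → ℝ, (∀ i ∈ A₂, x i = y i) → g x = g y) →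
      ∫ ω, f (fun i => X i ω) * g (fun i => X i ω) ∂μ ≤
        (∫ ω, f (fun i => X i ω) ∂μ) * ∫ ω, g (fun i => X i ω) ∂μ

theorem mgf_sum_le_prod_of_negAssoc {Ω : Type*} [MeasurableSpace Ω] (μ : Measure Ω)
    [IsProbabilityMeasure μ] {n : ℕ} (X : Fin n → Ω → ℝ)
    (hNA : NegAssoc μ X) (lam : ℝ) :
    ∫ ω, Real.exp (lam * ∑ i, X i ω) ∂μ ≤ ∏ i, ∫ ω, Real.exp (lam * X i ω) ∂μ := by
  set ε : ℝ := if 0 ≤ lam then 1 else -1 with hε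
  have hε2 : ε * ε = 1 := by
    rcases le_or_gt 0 lam with h | h
    · simp [hε, h]
    · simp [hε, not_le.2 h]
  have hmono : Monotone fun t : ℝ => ε * Real.exp (lam * t) := by
    rcases le_or_gt 0 lam with h | h
    · intro a b hab
      simp only [hε, if_pos h, one_mul]
      exact Real.exp_le_exp.2 (by nlinarith)
    · intro a b hab
      simp only [hε, if_neg (not_le.2 h)]
      have : Real.exp (lam * b) ≤ Real.exp (lam * a) := Real.exp_le_exp.2 (by nlinarith)
      linarith
  have key : ∀ s : Finset (Fin n),
      ∫ ω, Real.exp (lam * ∑ i ∈ s, X i ω) ∂μ ≤ ∏ i ∈ s, ∫ ω, Real.exp (lam * X i ω) ∂μ := by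
    intro s
    induction s using Finset.induction_on with
    | empty => simp
    | @insert j s hj ih =>
      have hNAs := hNA s {j} (by simp [Finset.disjoint_singleton_right, hj])
        (fun x => ε * Real.exp (lam * ∑ i ∈ s, x i))
        (fun x => ε * Real.exp (lam * x j))
        (hmono.comp fun x y hxy => Finset.sum_le_sum fun i _ => hxy i)
        (hmono.comp fun x y hxy => hxy j)
        (fun x y h => by rw [Finset.sum_congr rfl h])
        (fun x y h => by rw [h j (Finset.mem_singleton_self j)])
      have point : ∀ ω, Real.exp (lam * ∑ i ∈ insert j s, X i ω) =
          (ε * Real.exp (lam * ∑ i ∈ s, X i ω)) * (ε * Real.exp (lam * X j ω)) := by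
        intro ω
        rw [show (ε * Real.exp (lam * ∑ i ∈ s, X i ω)) * (ε * Real.exp (lam * X j ω)) =
          (ε * ε) * (Real.exp (lam * ∑ i ∈ s, X i ω) * Real.exp (lam * X j ω)) by ring,
          hε2, one_mul, ← Real.exp_add, Finset.sum_insert hj]
        ring_nf
      have h1 : ∫ ω, Real.exp (lam * ∑ i ∈ insert j s, X i ω) ∂μ ≤
          (∫ ω, ε * Real.exp (lam * ∑ i ∈ s, X i ω) ∂μ) *
            ∫ ω, ε * Real.exp (lam * X j ω) ∂μ := by
        calc ∫ ω, Real.exp (lam * ∑ i ∈ insert j s, X i ω) ∂μ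
            = ∫ ω, (ε * Real.exp (lam * ∑ i ∈ s, X i ω)) * (ε * Real.exp (lam * X j ω)) ∂μ := by
              simp_rw [point]
          _ ≤ _ := hNAs
      rw [integral_const_mul, integral_const_mul,
        show (ε * ∫ ω, Real.exp (lam * ∑ i ∈ s, X i ω) ∂μ) *
            (ε * ∫ ω, Real.exp (lam * X j ω) ∂μ) =
          (ε * ε) * ((∫ ω, Real.exp (lam * ∑ i ∈ s, X i ω) ∂μ) *
            ∫ ω, Real.exp (lam * X j ω) ∂μ) by ring, hε2, one_mul] at h1
      refine h1.trans ?_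
      rw [Finset.prod_insert hj, mul_comm (∫ ω, Real.exp (lam * X j ω) ∂μ)]
      exact mul_le_mul_of_nonneg_right ih (integral_nonneg fun ω => (Real.exp_pos _).le)
  simpa using key Finset.univ
end

section
/- In the two-level supply instance with n even supply nodes (half with supply (2−α)/n, half with supply α/n), if a random bipartite graph is formed by connecting each small supply node u (with s(u) = α/n) to each of the n demand nodes independently with probability γα/n where γ < 1/(4α), then with probability at least 1/2 the number of edges incident to the small supply nodes is less than n/4, and hence at least n/4 small supply nodes are isolated, so the total unfulfilled supply from isolated small nodes exceeds (n/4)·(α/n) = α/4. -/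
open MeasureTheory Finset ProbabilityTheory
open scoped Classical ENNReal

theorem wpc_small_nodes_isolated (n : ℕ) (hn : Even n) (hn0 : 0 < n)
    {Ω : Type*} [MeasurableSpace Ω] (μ : Measure Ω) [IsProbabilityMeasure μ]
    (α γ : ℝ) (hα : 0 < α) (hγ0 : 0 ≤ γ) (hγ : γ < 1 / (4 * α))
    (X : Fin (n / 2) × Fin n → Ω → Bool)
    (hmeas : ∀ p, Measurable (X p))
    (hindep : ProbabilityTheory.iIndepFun (m := fun _ => (inferInstance : MeasurableSpace Bool)) X μ)
    (hprob : ∀ p, μ {ω | X p ω = true} = ENNReal.ofReal (γ * α / n)) :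
    (1 / 2 : ℝ≥0∞) ≤
      μ {ω |
        (((Finset.univ.filter (fun p : Fin (n / 2) × Fin n => X p ω = true)).card : ℝ)
            < (n : ℝ) / 4) ∧
        ((n : ℝ) / 4 ≤
          ((Finset.univ.filter (fun u : Fin (n / 2) =>
              ∀ v : Fin n, X (u, v) ω = false)).card : ℝ)) ∧
        (α / 4 ≤
          ((Finset.univ.filter (fun u : Fin (n / 2) =>
              ∀ v : Fin n, X (u, v) ω = false)).card : ℝ) * (α / n)) } := by
  classical
  obtain ⟨k, hk⟩ := hn
  have hhalf : n / 2 = k := by omega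
  have hn2 : ((n / 2 : ℕ) : ℝ) = (n : ℝ) / 2 := by
    rw [hhalf]; have : n = 2 * k := by omega
    rw [this]; push_cast; ring
  have hnR : (0 : ℝ) < n := by exact_mod_cast hn0
  have hn4pos : (0 : ℝ) < (n : ℝ) / 4 := by positivity
  set f : Ω → ℝ≥0∞ := fun ω =>
    ∑ p : Fin (n / 2) × Fin n, (if X p ω = true then (1 : ℝ≥0∞) else 0) with hf
  have hsetmeas : ∀ p : Fin (n / 2) × Fin n, MeasurableSet {ω | X p ω = true} := fun p =>
    (hmeas p) (MeasurableSet.singleton true)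
  have htermmeas : ∀ p : Fin (n / 2) × Fin n,
      Measurable (fun ω => if X p ω = true then (1 : ℝ≥0∞) else 0) := fun p =>
    Measurable.ite (hsetmeas p) measurable_const measurable_const
  have hfmeas : Measurable f := Finset.measurable_sum _ (fun p _ => htermmeas p)
  have hfcard : ∀ ω, f ω =
      ((univ.filter (fun p : Fin (n / 2) × Fin n => X p ω = true)).card : ℝ≥0∞) := by
    intro ω
    simp [hf, Finset.sum_boole]
  have hint : ∫⁻ ω, f ω ∂μ = (n / 2 * n : ℕ) * ENNReal.ofReal (γ * α / n) := by
    rw [hf, lintegral_finset_sum _ (fun p _ => htermmeas p)]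
    have hterm : ∀ p : Fin (n / 2) × Fin n,
        ∫⁻ ω, (if X p ω = true then (1 : ℝ≥0∞) else 0) ∂μ = ENNReal.ofReal (γ * α / n) := by
      intro p
      have heq : (fun ω => if X p ω = true then (1 : ℝ≥0∞) else 0)
          = Set.indicator {ω | X p ω = true} (fun _ => (1 : ℝ≥0∞)) := by
        ext ω; simp [Set.indicator_apply]
      rw [heq, lintegral_indicator_const (hsetmeas p), hprob p, one_mul]
    simp only [hterm, Finset.sum_const, Finset.card_univ, Fintype.card_prod,
      Fintype.card_fin, nsmul_eq_mul]
  set A : Set Ω := {ω | ENNReal.ofReal ((n : ℝ) / 4) ≤ f ω} with hA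
  have hAmeas : MeasurableSet A := measurableSet_le measurable_const hfmeas
  -- Markov bound
  have hmark : μ A ≤ ENNReal.ofReal (2 * (γ * α)) := by
    have h1 := meas_ge_le_lintegral_div (μ := μ) hfmeas.aemeasurable
      (ε := ENNReal.ofReal ((n : ℝ) / 4))
      (by simp [ENNReal.ofReal_eq_zero, not_le, hn4pos]) (by simp)
    refine h1.trans ?_
    rw [hint]
    have hcast : ((n / 2 * n : ℕ) : ℝ≥0∞) = ENNReal.ofReal ((n / 2 * n : ℕ) : ℝ) := by
      rw [ENNReal.ofReal_natCast]
    rw [hcast, ← ENNReal.ofReal_mul (by positivity),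
      ← ENNReal.ofReal_div_of_pos hn4pos]
    apply ENNReal.ofReal_le_ofReal
    have : (((n / 2 * n : ℕ) : ℝ) * (γ * α / n)) / ((n : ℝ) / 4) = 2 * (γ * α) := by
      push_cast
      rw [hn2]
      field_simp
      ring
    rw [this]
  have hhalfval : ENNReal.ofReal (1 / 2 : ℝ) = (1 / 2 : ℝ≥0∞) := by
    rw [ENNReal.ofReal_div_of_pos (by norm_num)]
    norm_num
  have hga : γ * α < 1 / 4 := by
    have h := mul_lt_mul_of_pos_right hγ hα
    have h2 : (1 / (4 * α)) * α = 1 / 4 := by field_simp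
    linarith
  have hmark' : μ A ≤ 1 / 2 := by
    refine hmark.trans ?_
    rw [← hhalfval]
    apply ENNReal.ofReal_le_ofReal
    linarith
  -- deterministic inclusion
  have hsub : Aᶜ ⊆ {ω |
        (((Finset.univ.filter (fun p : Fin (n / 2) × Fin n => X p ω = true)).card : ℝ)
            < (n : ℝ) / 4) ∧
        ((n : ℝ) / 4 ≤
          ((Finset.univ.filter (fun u : Fin (n / 2) =>
              ∀ v : Fin n, X (u, v) ω = false)).card : ℝ)) ∧
        (α / 4 ≤
          ((Finset.univ.filter (fun u : Fin (n / 2) =>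
              ∀ v : Fin n, X (u, v) ω = false)).card : ℝ) * (α / n)) } := by
    intro ω hω
    simp only [Set.mem_compl_iff, hA, Set.mem_setOf_eq, not_le] at hω
    set P := univ.filter (fun p : Fin (n / 2) × Fin n => X p ω = true) with hP
    set S := univ.filter (fun u : Fin (n / 2) => ∀ v : Fin n, X (u, v) ω = false) with hS
    have hPcard : (P.card : ℝ) < (n : ℝ) / 4 := by
      rw [hfcard ω, ← hP] at hω
      have : ENNReal.ofReal (P.card : ℝ) < ENNReal.ofReal ((n : ℝ) / 4) := by
        rwa [ENNReal.ofReal_natCast]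
      exact (ENNReal.ofReal_lt_ofReal_iff hn4pos).mp this
    set T := univ.filter (fun u : Fin (n / 2) => ¬ ∀ v : Fin n, X (u, v) ω = false) with hT
    have hTex : ∀ u ∈ T, ∃ v : Fin n, X (u, v) ω = true := by
      intro u hu
      simp only [hT, mem_filter, mem_univ, true_and] at hu
      push_neg at hu
      obtain ⟨v, hv⟩ := hu
      exact ⟨v, by simpa using hv⟩
    choose g hg using hTex
    have hTP : T.card ≤ P.card := by
      apply Finset.card_le_card_of_injOn
        (fun u => if h : u ∈ T then ((u, g u h) : Fin (n / 2) × Fin n) else (u, ⟨0, hn0⟩))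
      · intro u hu
        simp only [Finset.mem_coe] at hu ⊢
        rw [dif_pos hu]
        simp only [hP, mem_filter, mem_univ, true_and]
        exact hg u hu
      · intro u hu u' hu' heq
        simp only [Finset.mem_coe] at hu hu'
        simp only [dif_pos hu, dif_pos hu'] at heq
        simpa using congrArg Prod.fst heq
    have hST : S.card + T.card = n / 2 := by
      have := Finset.card_filter_add_card_filter_not
        (s := (univ : Finset (Fin (n / 2))))
        (p := fun u => ∀ v : Fin n, X (u, v) ω = false)
      simpa [hS, hT, Finset.card_univ] using this
    have hSTr : (S.card : ℝ) + (T.card : ℝ) = ((n / 2 : ℕ) : ℝ) := by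
      exact_mod_cast congrArg (Nat.cast : ℕ → ℝ) hST
    have hTPr : (T.card : ℝ) ≤ (P.card : ℝ) := by exact_mod_cast hTP
    have hSbound : (n : ℝ) / 4 ≤ (S.card : ℝ) := by
      rw [hn2] at hSTr
      linarith
    refine ⟨hPcard, hSbound, ?_⟩
    have hkey : ((n : ℝ) / 4) * (α / n) = α / 4 := by
      field_simp
    calc α / 4 = ((n : ℝ) / 4) * (α / n) := hkey.symm
      _ ≤ (S.card : ℝ) * (α / n) :=
        mul_le_mul_of_nonneg_right hSbound (by positivity)
  calc (1 / 2 : ℝ≥0∞) = 1 - 1 / 2 := by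
        refine (ENNReal.sub_eq_of_eq_add (by simp) ?_).symm
        rw [ENNReal.add_halves]
    _ ≤ 1 - μ A := tsub_le_tsub_left hmark' 1
    _ = μ Aᶜ := (prob_compl_eq_one_sub hAmeas).symm
    _ ≤ _ := measure_mono hsub
end
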